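/- arXiv:1206.1457 — 3 statements merged into one kernel-verified Lean document; each statement's English description precedes it below -/
import Mathlib

section
/- For all real numbers a, b > 0, one has (√a − √b)² ≤ a(log a − log b) + b − a. -/
open Real

theorem sqrt_diff_sq_le (a b : ℝ) (ha : 0 < a) (hb : 0 < b) :
    (Real.sqrt a - Real.sqrt b) ^ 2 ≤ a * (Real.log a - Real.log b) + b - a := by
  have hsa : (0:ℝ) < Real.sqrt a := Real.sqrt_pos.2 ha
  have hsb : (0:ℝ) < Real.sqrt b := Real.sqrt_pos.2 hb
  have ht : 0 < Real.sqrt b / Real.sqrt a := div_pos hsb hsa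
  have h1 := Real.log_le_sub_one_of_pos ht
  have hlog : Real.log (Real.sqrt b / Real.sqrt a)
      = (Real.log b - Real.log a) / 2 := by
    rw [Real.log_div hsb.ne' hsa.ne', Real.log_sqrt hb.le, Real.log_sqrt ha.le]
    ring
  rw [hlog] at h1
  have hsa2 : Real.sqrt a ^ 2 = a := Real.sq_sqrt ha.le
  have hsb2 : Real.sqrt b ^ 2 = b := Real.sq_sqrt hb.le
  have hdiv : a * (Real.sqrt b / Real.sqrt a) = Real.sqrt a * Real.sqrt b := by
    field_simp
    nlinarith
  nlinarith [mul_le_mul_of_nonneg_left h1 ha.le]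
end

section
/- For all real numbers a > 0 and b ≥ b₀ > 0, one has a(log a − log b) + b − a ≤ (1/b₀)(a − b)², where log is the natural logarithm. -/
open Real

theorem log_quotient_upper (a b b₀ : ℝ) (ha : 0 < a) (hb₀ : 0 < b₀) (hb : b₀ ≤ b) :
    a * (Real.log a - Real.log b) + b - a ≤ (1 / b₀) * (a - b) ^ 2 := by
  have hb' : 0 < b := lt_of_lt_of_le hb₀ hb
  have hlog : Real.log a - Real.log b = Real.log (a / b) := (Real.log_div ha.ne' hb'.ne').symm
  have h1 : Real.log (a / b) ≤ a / b - 1 :=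
    Real.log_le_sub_one_of_pos (div_pos ha hb')
  have h2 : a * (Real.log a - Real.log b) + b - a ≤ (a - b) ^ 2 / b := by
    rw [hlog]
    have := mul_le_mul_of_nonneg_left h1 ha.le
    have heq : a * (a / b - 1) + b - a = (a - b) ^ 2 / b := by
      field_simp; ring
    nlinarith
  have h3 : (a - b) ^ 2 / b ≤ (1 / b₀) * (a - b) ^ 2 := by
    rw [one_div, inv_mul_eq_div]
    exact div_le_div_of_nonneg_left (sq_nonneg _) hb₀ hb
  linarith
end

section
/- Let f, g, h be nonnegative locally integrable functions on (t₀,∞) with f absolutely continuous and f'(t) ≤ g(t)f(t) + h(t) for a.e. t ≥ t₀. If there exist r, a₁, a₂, a₃ > 0 such that for all t ≥ t₀: ∫ₜ^{t+r} f ≤ a₁, ∫ₜ^{t+r} g ≤ a₂, and ∫ₜ^{t+r} h ≤ a₃, then f(t+r) ≤ (a₁/r + a₃)·exp(a₂) for all t ≥ t₀. -/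
open MeasureTheory intervalIntegral

open Set Filter Topology

private lemma ug_int_nonneg {t₀ a b : ℝ} {p : ℝ → ℝ} (hab : a ≤ b) (ht : t₀ ≤ a)
    (hp : ∀ x, t₀ < x → 0 ≤ p x) : 0 ≤ ∫ x in a..b, p x := by
  rw [intervalIntegral.integral_of_le hab]
  exact MeasureTheory.setIntegral_nonneg measurableSet_Ioc
    (fun x hx => hp x (lt_of_le_of_lt ht hx.1))

private lemma ug_stepA {t₀ : ℝ} {f f' g h : ℝ → ℝ}
    (hderiv : ∀ t, t₀ < t → HasDerivAt f (f' t) t)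
    (hf'int : ∀ s t, t₀ ≤ s → IntervalIntegrable f' volume s t)
    (hgint : ∀ s t, t₀ ≤ s → IntervalIntegrable g volume s t)
    (hhint : ∀ s t, t₀ ≤ s → IntervalIntegrable h volume s t)
    (hineq : ∀ t, t₀ < t → f' t ≤ g t * f t + h t)
    {u v : ℝ} (hu : t₀ < u) (huv : u ≤ v) :
    f v ≤ f u + ∫ x in u..v, (g x * f x + h x) := by
  have hcf : ContinuousOn f (uIcc u v) := by
    intro x hx
    rw [uIcc_of_le huv] at hx
    exact ((hderiv x (lt_of_lt_of_le hu hx.1)).continuousAt).continuousWithinAt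
  have hint : IntervalIntegrable (fun x => g x * f x + h x) volume u v :=
    ((hgint u v hu.le).mul_continuousOn hcf).add (hhint u v hu.le)
  have heq : ∫ x in u..v, f' x = f v - f u := by
    apply intervalIntegral.integral_eq_sub_of_hasDerivAt
    · intro x hx
      rw [uIcc_of_le huv] at hx
      exact hderiv x (lt_of_lt_of_le hu hx.1)
    · exact hf'int u v hu.le
  have hmono : (∫ x in u..v, f' x) ≤ ∫ x in u..v, (g x * f x + h x) := by
    apply intervalIntegral.integral_mono_on huv (hf'int u v hu.le) hint
    intro x hx
    exact hineq x (lt_of_lt_of_le hu hx.1)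
  linarith [heq ▸ hmono]

private lemma ug_core_kappa {t₀ : ℝ} {f f' g h : ℝ → ℝ}
    (hf0 : ∀ t, t₀ < t → 0 ≤ f t) (hg0 : ∀ t, t₀ < t → 0 ≤ g t)
    (hh0 : ∀ t, t₀ < t → 0 ≤ h t)
    (hderiv : ∀ t, t₀ < t → HasDerivAt f (f' t) t)
    (hf'int : ∀ s t, t₀ ≤ s → IntervalIntegrable f' volume s t)
    (hgint : ∀ s t, t₀ ≤ s → IntervalIntegrable g volume s t)
    (hhint : ∀ s t, t₀ ≤ s → IntervalIntegrable h volume s t)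
    (hineq : ∀ t, t₀ < t → f' t ≤ g t * f t + h t)
    {s T : ℝ} (hs : t₀ < s) (hsT : s ≤ T) {κ : ℝ} (hκ : 1 < κ) :
    f T ≤ (f s + ∫ x in s..T, h x) * Real.exp (κ * ∫ x in s..T, g x) := by
  set Φ : ℝ → ℝ := fun w => (f s + ∫ x in s..w, h x) * Real.exp (κ * ∫ x in s..w, g x) with hΦ
  have hcf : ContinuousOn f (Icc s T) := fun x hx =>
    ((hderiv x (lt_of_lt_of_le hs hx.1)).continuousAt).continuousWithinAt
  have hHc : ContinuousOn (fun w => ∫ x in s..w, h x) (Icc s T) := by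
    have := intervalIntegral.continuousOn_primitive_interval
      (f := h) (a := s) (b := T) (μ := volume) ?_
    · rwa [uIcc_of_le hsT] at this
    · rw [uIcc_of_le hsT]
      exact (intervalIntegrable_iff_integrableOn_Icc_of_le hsT).1 (hhint s T hs.le)
  have hGc : ContinuousOn (fun w => ∫ x in s..w, g x) (Icc s T) := by
    have := intervalIntegral.continuousOn_primitive_interval
      (f := g) (a := s) (b := T) (μ := volume) ?_
    · rwa [uIcc_of_le hsT] at this
    · rw [uIcc_of_le hsT]
      exact (intervalIntegrable_iff_integrableOn_Icc_of_le hsT).1 (hgint s T hs.le)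
  have hΦc : ContinuousOn Φ (Icc s T) :=
    (continuousOn_const.add hHc).mul
      (Real.continuous_exp.comp_continuousOn (continuousOn_const.mul hGc))
  have s_closed : IsClosed ({w | f w ≤ Φ w} ∩ Icc s T) := by
    have hpair : ContinuousOn (fun w => (f w, Φ w)) (Icc s T) := hcf.prodMk hΦc
    rw [inter_comm]
    exact hpair.preimage_isClosed_of_isClosed isClosed_Icc isClosed_le_prod
  have main : Icc s T ⊆ {w | f w ≤ Φ w} := by
    apply s_closed.Icc_subset_of_forall_exists_gt
    · show f s ≤ Φ s
      simp [hΦ]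
    · rintro w ⟨hwS, hws, hwT⟩ v hv
      have ht₀w : t₀ < w := lt_of_lt_of_le hs hws
      set m := min v T with hm
      have hwm : w < m := lt_min hv hwT
      set γ₀ : ℝ := min (1/2) ((κ - 1)/κ) with hγ₀def
      have hκ0 : (0:ℝ) < κ := lt_trans one_pos hκ
      have hγ₀pos : 0 < γ₀ := lt_min (by norm_num) (div_pos (by linarith) hκ0)
      -- continuity of the local primitive of g at w
      have hGwc : ContinuousOn (fun x => ∫ u in w..x, g u) (Icc w T) := by
        have := intervalIntegral.continuousOn_primitive_interval
          (f := g) (a := w) (b := T) (μ := volume) ?_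
        · rwa [uIcc_of_le hwT.le] at this
        · rw [uIcc_of_le hwT.le]
          exact (intervalIntegrable_iff_integrableOn_Icc_of_le hwT.le).1 (hgint w T ht₀w.le)
      have hsub : Ioo w m ⊆ Icc w T :=
        fun x hx => ⟨hx.1.le, hx.2.le.trans (min_le_right v T)⟩
      have hCw : ContinuousWithinAt (fun x => ∫ u in w..x, g u) (Ioo w m) w :=
        (hGwc w (left_mem_Icc.2 hwT.le)).mono hsub
      have hT0 : Tendsto (fun x => ∫ u in w..x, g u) (𝓝[Ioo w m] w) (𝓝 0) := by
        have := hCw.tendsto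
        rwa [intervalIntegral.integral_same] at this
      have hev : ∀ᶠ x in 𝓝[Ioo w m] w, (∫ u in w..x, g u) < γ₀ :=
        hT0.eventually_lt_const hγ₀pos
      haveI : (𝓝[Ioo w m] w).NeBot := by
        apply mem_closure_iff_nhdsWithin_neBot.1
        rw [closure_Ioo hwm.ne]
        exact left_mem_Icc.2 hwm.le
      obtain ⟨b, hbγ, hb⟩ := (hev.and eventually_mem_nhdsWithin).exists
      set γ : ℝ := ∫ u in w..b, g u with hγdef
      set η : ℝ := ∫ u in w..b, h u with hηdef
      have hwb : w ≤ b := hb.1.le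
      have hγ0 : 0 ≤ γ := ug_int_nonneg hwb ht₀w.le hg0
      have hη0 : 0 ≤ η := ug_int_nonneg hwb ht₀w.le hh0
      have hγhalf : γ < 1/2 := lt_of_lt_of_le hbγ (min_le_left _ _)
      have hγκ : κ * γ ≤ κ - 1 := by
        have : γ ≤ (κ - 1)/κ := le_of_lt (lt_of_lt_of_le hbγ (min_le_right _ _))
        calc κ * γ ≤ κ * ((κ - 1)/κ) := by nlinarith
        _ = κ - 1 := by field_simp
      -- max of f on [w,b]
      have hcfb : ContinuousOn f (Icc w b) := fun x hx =>
        ((hderiv x (lt_of_lt_of_le ht₀w hx.1)).continuousAt).continuousWithinAt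
      obtain ⟨z, hz, hzmax⟩ := isCompact_Icc.exists_isMaxOn (nonempty_Icc.2 hwb) hcfb
      set M := f z with hM
      have hM0 : 0 ≤ M := hf0 z (lt_of_lt_of_le ht₀w hz.1)
      have hfb : f b ≤ M := hzmax (right_mem_Icc.2 hwb)
      -- bound M
      have hzA : f z ≤ f w + ∫ x in w..z, (g x * f x + h x) :=
        ug_stepA hderiv hf'int hgint hhint hineq ht₀w hz.1
      have hintgf : IntervalIntegrable (fun x => g x * f x) volume w z :=
        (hgint w z ht₀w.le).mul_continuousOn (by
          rw [uIcc_of_le hz.1]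
          exact hcfb.mono (Icc_subset_Icc le_rfl hz.2))
      have hsplit : (∫ x in w..z, (g x * f x + h x))
          = (∫ x in w..z, g x * f x) + ∫ x in w..z, h x :=
        intervalIntegral.integral_add hintgf (hhint w z ht₀w.le)
      have hgf_le : (∫ x in w..z, g x * f x) ≤ M * γ := by
        have h1 : (∫ x in w..z, g x * f x) ≤ ∫ x in w..z, g x * M := by
          apply intervalIntegral.integral_mono_on hz.1 hintgf
            ((hgint w z ht₀w.le).mul_const M)
          intro x hx
          exact mul_le_mul_of_nonneg_left (hzmax ⟨hx.1, hx.2.trans hz.2⟩)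
            (hg0 x (lt_of_lt_of_le ht₀w hx.1))
        have h2 : (∫ x in w..z, g x * M) = (∫ x in w..z, g x) * M :=
          intervalIntegral.integral_mul_const M g
        have h3 : (∫ x in w..z, g x) ≤ γ := by
          have hadd : (∫ x in w..z, g x) + (∫ x in w..b, g x) - (∫ x in w..z, g x) = γ := by
            rw [hγdef]; ring
          have : (∫ x in w..z, g x) + (∫ x in z..b, g x) = ∫ x in w..b, g x :=
            intervalIntegral.integral_add_adjacent_intervals (hgint w z ht₀w.le)
              (hgint z b (le_trans ht₀w.le hz.1))
          have hpos : 0 ≤ ∫ x in z..b, g x :=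
            ug_int_nonneg hz.2 (le_trans ht₀w.le hz.1) hg0
          linarith
        calc (∫ x in w..z, g x * f x) ≤ (∫ x in w..z, g x) * M := h2 ▸ h1
        _ ≤ γ * M := mul_le_mul_of_nonneg_right h3 hM0
        _ = M * γ := mul_comm _ _
      have hh_le : (∫ x in w..z, h x) ≤ η := by
        have : (∫ x in w..z, h x) + (∫ x in z..b, h x) = ∫ x in w..b, h x :=
          intervalIntegral.integral_add_adjacent_intervals (hhint w z ht₀w.le)
            (hhint z b (le_trans ht₀w.le hz.1))
        have hpos : 0 ≤ ∫ x in z..b, h x :=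
          ug_int_nonneg hz.2 (le_trans ht₀w.le hz.1) hh0
        rw [hηdef]
        linarith
      have hMbound : M ≤ f w + M * γ + η := by
        rw [hM]
        calc f z ≤ f w + ∫ x in w..z, (g x * f x + h x) := hzA
        _ = f w + ((∫ x in w..z, g x * f x) + ∫ x in w..z, h x) := by rw [hsplit]
        _ ≤ f w + (M * γ + η) := by
            have := add_le_add hgf_le hh_le
            linarith
        _ = f w + M * γ + η := by ring
      have hfw0 : 0 ≤ f w := hf0 w ht₀w
      -- M ≤ (f w + η) * (1 + κ γ)
      have hkey : f b ≤ (f w + η) * (1 + κ * γ) := by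
        nlinarith [mul_nonneg (add_nonneg hfw0 hη0) (mul_nonneg hγ0 (by linarith : (0:ℝ) ≤ κ - 1 - κ * γ))]
      have hexp : (1 + κ * γ) ≤ Real.exp (κ * γ) := by
        have := Real.add_one_le_exp (κ * γ)
        linarith
      have hfb2 : f b ≤ (f w + η) * Real.exp (κ * γ) :=
        le_trans hkey (mul_le_mul_of_nonneg_left hexp (add_nonneg hfw0 hη0))
      -- now use invariant at w
      have hGw0 : 0 ≤ ∫ x in s..w, g x := ug_int_nonneg hws hs.le hg0
      have hEw1 : 1 ≤ Real.exp (κ * ∫ x in s..w, g x) :=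
        Real.one_le_exp (by positivity)
      have hHw0 : 0 ≤ ∫ x in s..w, h x := ug_int_nonneg hws hs.le hh0
      have hfs0 : 0 ≤ f s := hf0 s hs
      have hstep2 : f w + η ≤ (f s + (∫ x in s..w, h x) + η) * Real.exp (κ * ∫ x in s..w, g x) := by
        have h1 : f w ≤ Φ w := hwS
        have h2 : η ≤ η * Real.exp (κ * ∫ x in s..w, g x) := le_mul_of_one_le_right hη0 hEw1
        rw [hΦ] at h1
        simp only at h1
        nlinarith [h1, h2]
      have hHadd : (∫ x in s..w, h x) + η = ∫ x in s..b, h x := by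
        rw [hηdef]
        exact intervalIntegral.integral_add_adjacent_intervals (hhint s w hs.le)
          (hhint w b ht₀w.le)
      have hGadd : (∫ x in s..w, g x) + γ = ∫ x in s..b, g x := by
        rw [hγdef]
        exact intervalIntegral.integral_add_adjacent_intervals (hgint s w hs.le)
          (hgint w b ht₀w.le)
      have hbS : f b ≤ Φ b := by
        rw [hΦ]
        simp only
        calc f b ≤ (f w + η) * Real.exp (κ * γ) := hfb2
        _ ≤ ((f s + (∫ x in s..w, h x) + η) * Real.exp (κ * ∫ x in s..w, g x))
              * Real.exp (κ * γ) :=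
            mul_le_mul_of_nonneg_right hstep2 (Real.exp_nonneg _)
        _ = (f s + ∫ x in s..b, h x) * Real.exp (κ * ∫ x in s..b, g x) := by
            rw [← hHadd, ← hGadd, mul_add, Real.exp_add]
            ring
      exact ⟨b, hbS, hb.1, (hb.2.trans_le (min_le_left v T)).le⟩
  exact main (right_mem_Icc.2 hsT)

private lemma ug_core {t₀ : ℝ} {f f' g h : ℝ → ℝ}
    (hf0 : ∀ t, t₀ < t → 0 ≤ f t) (hg0 : ∀ t, t₀ < t → 0 ≤ g t)
    (hh0 : ∀ t, t₀ < t → 0 ≤ h t)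
    (hderiv : ∀ t, t₀ < t → HasDerivAt f (f' t) t)
    (hf'int : ∀ s t, t₀ ≤ s → IntervalIntegrable f' volume s t)
    (hgint : ∀ s t, t₀ ≤ s → IntervalIntegrable g volume s t)
    (hhint : ∀ s t, t₀ ≤ s → IntervalIntegrable h volume s t)
    (hineq : ∀ t, t₀ < t → f' t ≤ g t * f t + h t)
    {s T : ℝ} (hs : t₀ < s) (hsT : s ≤ T) :
    f T ≤ (f s + ∫ x in s..T, h x) * Real.exp (∫ x in s..T, g x) := by
  set C := f s + ∫ x in s..T, h x
  set G := ∫ x in s..T, g x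
  have ht : Tendsto (fun κ : ℝ => C * Real.exp (κ * G)) (𝓝[>] 1) (𝓝 (C * Real.exp (1 * G))) :=
    ((continuous_const.mul (Real.continuous_exp.comp
      (continuous_id.mul continuous_const))).tendsto 1).mono_left nhdsWithin_le_nhds
  rw [one_mul] at ht
  refine ge_of_tendsto ht ?_
  filter_upwards [self_mem_nhdsWithin] with κ hκ
  exact ug_core_kappa hf0 hg0 hh0 hderiv hf'int hgint hhint hineq hs hsT hκ

/-- Uniform Gronwall lemma (Temam, Ch. III, Lemma 1.1). -/
theorem uniform_gronwall (t₀ r a₁ a₂ a₃ : ℝ) (f f' g h : ℝ → ℝ)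
    (hr : 0 < r) (ha₁ : 0 < a₁) (ha₂ : 0 < a₂) (ha₃ : 0 < a₃)
    (hf0 : ∀ t, t₀ < t → 0 ≤ f t) (hg0 : ∀ t, t₀ < t → 0 ≤ g t)
    (hh0 : ∀ t, t₀ < t → 0 ≤ h t)
    (hderiv : ∀ t, t₀ < t → HasDerivAt f (f' t) t)
    (hf'int : ∀ s t, t₀ ≤ s → IntervalIntegrable f' volume s t)
    (hfint : ∀ s t, t₀ ≤ s → IntervalIntegrable f volume s t)
    (hgint : ∀ s t, t₀ ≤ s → IntervalIntegrable g volume s t)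
    (hhint : ∀ s t, t₀ ≤ s → IntervalIntegrable h volume s t)
    (hineq : ∀ t, t₀ < t → f' t ≤ g t * f t + h t)
    (hf : ∀ t, t₀ ≤ t → (∫ s in t..(t + r), f s) ≤ a₁)
    (hg : ∀ t, t₀ ≤ t → (∫ s in t..(t + r), g s) ≤ a₂)
    (hh : ∀ t, t₀ ≤ t → (∫ s in t..(t + r), h s) ≤ a₃) :
    ∀ t, t₀ ≤ t → f (t + r) ≤ (a₁ / r + a₃) * Real.exp a₂ := by
  intro t ht
  have hE : (0:ℝ) < Real.exp a₂ := Real.exp_pos _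
  have hrle : t ≤ t + r := by linarith
  have key : ∀ s ∈ Ioc t (t + r), f (t + r) ≤ (f s + a₃) * Real.exp a₂ := by
    intro s hsmem
    have hts : t₀ < s := lt_of_le_of_lt ht hsmem.1
    have h1 : f (t + r) ≤ (f s + ∫ x in s..(t + r), h x) * Real.exp (∫ x in s..(t + r), g x) :=
      ug_core hf0 hg0 hh0 hderiv hf'int hgint hhint hineq hts hsmem.2
    have hH : (∫ x in s..(t + r), h x) ≤ a₃ := by
      have hsplit : (∫ x in t..s, h x) + (∫ x in s..(t + r), h x) = ∫ x in t..(t + r), h x :=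
        intervalIntegral.integral_add_adjacent_intervals (hhint t s ht) (hhint s (t + r) hts.le)
      have h0 : 0 ≤ ∫ x in t..s, h x := ug_int_nonneg hsmem.1.le ht hh0
      linarith [hh t ht]
    have hG : (∫ x in s..(t + r), g x) ≤ a₂ := by
      have hsplit : (∫ x in t..s, g x) + (∫ x in s..(t + r), g x) = ∫ x in t..(t + r), g x :=
        intervalIntegral.integral_add_adjacent_intervals (hgint t s ht) (hgint s (t + r) hts.le)
      have h0 : 0 ≤ ∫ x in t..s, g x := ug_int_nonneg hsmem.1.le ht hg0
      linarith [hg t ht]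
    have hfs : 0 ≤ f s := hf0 s hts
    have hH0 : 0 ≤ ∫ x in s..(t + r), h x := ug_int_nonneg hsmem.2 hts.le hh0
    calc f (t + r) ≤ (f s + ∫ x in s..(t + r), h x) * Real.exp (∫ x in s..(t + r), g x) := h1
    _ ≤ (f s + a₃) * Real.exp (∫ x in s..(t + r), g x) :=
        mul_le_mul_of_nonneg_right (by linarith) (Real.exp_nonneg _)
    _ ≤ (f s + a₃) * Real.exp a₂ :=
        mul_le_mul_of_nonneg_left (Real.exp_le_exp.2 hG) (by linarith)
  have hint1 : IntervalIntegrable (fun s => (f s + a₃) * Real.exp a₂) volume t (t + r) :=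
    ((hfint t (t + r) ht).add (intervalIntegrable_const)).mul_const _
  have hmono : (∫ _ in t..(t + r), f (t + r)) ≤ ∫ s in t..(t + r), (f s + a₃) * Real.exp a₂ := by
    rw [intervalIntegral.integral_of_le hrle, intervalIntegral.integral_of_le hrle]
    apply MeasureTheory.setIntegral_mono_on
      (integrableOn_const (hs := measure_Ioc_lt_top.ne)) hint1.1 measurableSet_Ioc
    exact fun s hs => key s hs
  have hLHS : (∫ _ in t..(t + r), f (t + r)) = r * f (t + r) := by
    rw [intervalIntegral.integral_const]
    simp [smul_eq_mul, add_sub_cancel_left]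
  have hRHS : (∫ s in t..(t + r), (f s + a₃) * Real.exp a₂)
      = ((∫ s in t..(t + r), f s) + r * a₃) * Real.exp a₂ := by
    rw [intervalIntegral.integral_mul_const, intervalIntegral.integral_add
      (hfint t (t + r) ht) intervalIntegrable_const, intervalIntegral.integral_const]
    simp [smul_eq_mul, add_sub_cancel_left]
  have hmain : r * f (t + r) ≤ (a₁ + r * a₃) * Real.exp a₂ := by
    rw [hLHS, hRHS] at hmono
    calc r * f (t + r) ≤ ((∫ s in t..(t + r), f s) + r * a₃) * Real.exp a₂ := hmono
    _ ≤ (a₁ + r * a₃) * Real.exp a₂ :=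
        mul_le_mul_of_nonneg_right (by linarith [hf t ht]) (Real.exp_nonneg _)
  have : f (t + r) ≤ (a₁ + r * a₃) * Real.exp a₂ / r := by
    rw [le_div_iff₀ hr]
    linarith
  calc f (t + r) ≤ (a₁ + r * a₃) * Real.exp a₂ / r := this
  _ = (a₁ / r + a₃) * Real.exp a₂ := by field_simp
end
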